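/- Let E ⊂ ℝ^m be a convex set and suppose E contains the scaled cube 2kQ × {0} (where Q = [-1/2,1/2]ⁿ sits in the first n coordinates, n ≤ m) for some k > 0. Set ε = 1/(2k). Then E + (Q × {0}) ⊆ (1 + ε)E, and if additionally k > 1/2, then (1 - ε)E ⊆ E ⊖ (Q × {0}). -/

import Mathlib

open MeasureTheory Set
open scoped ENNReal Pointwise

/-- The cube `Q = [-1/2, 1/2]^n` in `ℝⁿ`. -/
def cube (n : ℕ) : Set (Fin n → ℝ) := {q | ∀ i, |q i| ≤ 1/2}

/-- Dilation containments for Minkowski thickening and erosion of a convex set containing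
`2kQ × {0}`. -/
theorem dilation_containments (n d : ℕ) (E : Set ((Fin n → ℝ) × (Fin d → ℝ)))
    (hE : Convex ℝ E) (k : ℝ) (hk : 0 < k)
    (hbox : ∀ q ∈ cube n, (((2 * k) • q : Fin n → ℝ), (0 : Fin d → ℝ)) ∈ E) :
    E + (cube n ×ˢ ({0} : Set (Fin d → ℝ))) ⊆ (1 + 1 / (2 * k)) • E ∧
    (1 / 2 < k →
      (1 - 1 / (2 * k)) • E ⊆
        {y | ∀ q ∈ cube n, y + (q, (0 : Fin d → ℝ)) ∈ E}) := by
  have hk2 : (0:ℝ) < 2 * k := by linarith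
  set ε : ℝ := 1 / (2 * k) with hε
  have hεpos : 0 < ε := by positivity
  have hε2k : ε * (2 * k) = 1 := one_div_mul_cancel hk2.ne'
  constructor
  · rintro y hy
    rw [Set.mem_add] at hy
    obtain ⟨e, he, p, hp, rfl⟩ := hy
    obtain ⟨hq, hz⟩ := hp
    have hz' : p.2 = 0 := hz
    have h1 : (0:ℝ) < 1 + ε := by linarith
    have hsum : (1 + ε)⁻¹ + ε / (1 + ε) = 1 := by
      rw [inv_eq_one_div, ← add_div, div_self h1.ne']
    refine ⟨(1 + ε)⁻¹ • e + (ε / (1 + ε)) • ((2 * k) • p.1, (0 : Fin d → ℝ)),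
      hE he (hbox p.1 hq) (by positivity) (by positivity) hsum, ?_⟩
    show (1 + ε) • ((1 + ε)⁻¹ • e + (ε / (1 + ε)) • ((2 * k) • p.1, (0 : Fin d → ℝ))) = e + p
    rw [smul_add, smul_smul, smul_smul]
    have e1 : (1 + ε) * (1 + ε)⁻¹ = 1 := mul_inv_cancel₀ (ne_of_gt h1)
    have e2 : (1 + ε) * (ε / (1 + ε)) = ε := by field_simp
    rw [e1, e2, one_smul]
    have : ε • ((2 * k) • p.1, (0 : Fin d → ℝ)) = p := by
      rw [Prod.smul_mk, smul_smul, hε2k, one_smul, smul_zero]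
      exact Prod.ext rfl hz'.symm
    rw [this]
  · intro hk' y hy
    obtain ⟨x, hx, rfl⟩ := hy
    intro q hq
    have hεlt : ε < 1 := by
      rw [hε, div_lt_one hk2]; linarith
    have h := hE hx (hbox q hq) (show (0:ℝ) ≤ 1 - ε by linarith) hεpos.le
      (show (1 - ε) + ε = 1 by ring)
    have : ε • (((2 * k) • q : Fin n → ℝ), (0 : Fin d → ℝ)) = (q, (0 : Fin d → ℝ)) := by
      rw [Prod.smul_mk, smul_smul, hε2k, one_smul, smul_zero]
    rw [this] at h
    exact h
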